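/- Let 0 < f ≤ g < ∞ and M > 0, and let Λ be a nonnegative real random variable with E[Λ] = 1 and E[e^{−MΛ}] ≤ e^{−6g}. Let Υ be a nonempty finite set of pairs with associated values d(a,b) ∈ [2f, M], and define the random variable U_Υ(Λ) = |Υ|^{−1} Σ_{(a,b)∈Υ} e^{−Λ·d(a,b)}. Then P[ U̲ ≤ U_Υ(Λ) ≤ Ū ] ≥ χ, where U̲ = e^{−M·λ̄}, Ū = e^{−2f·λ̲}, λ̲ = g/M, λ̄ = 2/(1 − e^{−5g}), and χ = (1 − e^{−5g})/2. -/
import Mathlib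


open Real MeasureTheory

/-- **Bounding the `U`-values.** Let `Λ ≥ 0` be a real random
variable with `E[Λ] = 1` and `E[e^{-MΛ}] ≤ e^{-6g}` where `0 < f ≤ g` and
`M > 0`.  Let `Υ` be a nonempty finite set with values `d i ∈ [2f, M]` and let
`U_Υ(Λ) = |Υ|⁻¹ Σ_i e^{-Λ d i}`.  Then
`P[e^{-Mλ̄} ≤ U_Υ(Λ) ≤ e^{-2fλ̲}] ≥ χ` with `λ̲ = g/M`, `λ̄ = 2/(1-e^{-5g})`
and `χ = (1-e^{-5g})/2`. -/
theorem cluster_mean_value_bounded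
    {Ω : Type*} [MeasureSpace Ω] [IsProbabilityMeasure (volume : Measure Ω)]
    (Λ : Ω → ℝ) (hmeas : Measurable Λ) (hnonneg : ∀ ω, 0 ≤ Λ ω)
    (hint : Integrable Λ) (hmean : ∫ ω, Λ ω = 1)
    (f g M : ℝ) (hf : 0 < f) (hfg : f ≤ g) (hM : 0 < M)
    (hlap : ∫ ω, exp (-(M * Λ ω)) ≤ exp (-(6 * g)))
    {ι : Type*} (Υ : Finset ι) (hne : Υ.Nonempty) (d : ι → ℝ)
    (hd : ∀ i ∈ Υ, 2 * f ≤ d i ∧ d i ≤ M) :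
    (1 - exp (-(5 * g))) / 2 ≤
      (volume {ω |
        exp (-(M * (2 / (1 - exp (-(5 * g)))))) ≤
            (Υ.card : ℝ)⁻¹ * ∑ i ∈ Υ, exp (-(Λ ω * d i)) ∧
        (Υ.card : ℝ)⁻¹ * ∑ i ∈ Υ, exp (-(Λ ω * d i)) ≤
            exp (-(2 * f * (g / M)))}).toReal := by
  have hg : 0 < g := lt_of_lt_of_le hf hfg
  set lo : ℝ := g / M with hlo
  set hi : ℝ := 2 / (1 - exp (-(5 * g))) with hhi
  have hexp5 : exp (-(5 * g)) < 1 := by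
    rw [exp_lt_one_iff]; nlinarith
  have hden : 0 < 1 - exp (-(5 * g)) := by linarith
  have hi_pos : 0 < hi := by positivity
  have lo_pos : 0 < lo := by positivity
  have hcard : 0 < (Υ.card : ℝ) := by
    exact_mod_cast Finset.card_pos.mpr hne
  -- the nice event implies the target event
  have hsub : {ω | lo ≤ Λ ω ∧ Λ ω ≤ hi} ⊆ {ω |
        exp (-(M * hi)) ≤ (Υ.card : ℝ)⁻¹ * ∑ i ∈ Υ, exp (-(Λ ω * d i)) ∧
        (Υ.card : ℝ)⁻¹ * ∑ i ∈ Υ, exp (-(Λ ω * d i)) ≤ exp (-(2 * f * lo))} := by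
    rintro ω ⟨h1, h2⟩
    constructor
    · have hterm : ∀ i ∈ Υ, exp (-(M * hi)) ≤ exp (-(Λ ω * d i)) := by
        intro i hi'
        apply exp_le_exp.mpr
        have := mul_le_mul h2 (hd i hi').2 (le_trans (by positivity) (hd i hi').1)
          hi_pos.le
        nlinarith
      have hsum : (Υ.card : ℝ) * exp (-(M * hi)) ≤ ∑ i ∈ Υ, exp (-(Λ ω * d i)) := by
        calc (Υ.card : ℝ) * exp (-(M * hi)) = ∑ _i ∈ Υ, exp (-(M * hi)) := by
              rw [Finset.sum_const, nsmul_eq_mul]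
          _ ≤ ∑ i ∈ Υ, exp (-(Λ ω * d i)) := Finset.sum_le_sum hterm
      have := mul_le_mul_of_nonneg_left hsum (inv_nonneg.mpr hcard.le)
      rwa [← mul_assoc, inv_mul_cancel₀ hcard.ne', one_mul] at this
    · have hterm : ∀ i ∈ Υ, exp (-(Λ ω * d i)) ≤ exp (-(2 * f * lo)) := by
        intro i hi'
        apply exp_le_exp.mpr
        have := mul_le_mul h1 (hd i hi').1 (by positivity) (hnonneg ω)
        nlinarith
      have hsum : ∑ i ∈ Υ, exp (-(Λ ω * d i)) ≤ (Υ.card : ℝ) * exp (-(2 * f * lo)) := by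
        calc ∑ i ∈ Υ, exp (-(Λ ω * d i)) ≤ ∑ _i ∈ Υ, exp (-(2 * f * lo)) :=
              Finset.sum_le_sum hterm
          _ = (Υ.card : ℝ) * exp (-(2 * f * lo)) := by
              rw [Finset.sum_const, nsmul_eq_mul]
      have := mul_le_mul_of_nonneg_left hsum (inv_nonneg.mpr hcard.le)
      rwa [← mul_assoc, inv_mul_cancel₀ hcard.ne', one_mul] at this
  -- bad events
  set A : Set Ω := {ω | Λ ω < lo} with hA
  set B : Set Ω := {ω | hi < Λ ω} with hB
  have hAmeas : MeasurableSet A := measurableSet_lt hmeas measurable_const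
  have hBmeas : MeasurableSet B := measurableSet_lt measurable_const hmeas
  have hEeq : {ω | lo ≤ Λ ω ∧ Λ ω ≤ hi} = (A ∪ B)ᶜ := by
    ext ω; simp [hA, hB, not_lt, and_comm]
  -- Markov for A
  have hexpint : Integrable (fun ω => exp (-(M * Λ ω))) := by
    apply Integrable.mono' (integrable_const 1)
      ((hmeas.const_mul M).neg.exp.aestronglyMeasurable)
    filter_upwards with ω
    rw [Real.norm_eq_abs, abs_of_pos (exp_pos _)]
    have : -(M * Λ ω) ≤ 0 := by nlinarith [hnonneg ω]
    calc exp (-(M * Λ ω)) ≤ exp 0 := exp_le_exp.mpr this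
      _ = 1 := exp_zero
  have hmarkovA : exp (-g) * (volume {ω | exp (-g) ≤ exp (-(M * Λ ω))}).toReal ≤
      exp (-(6 * g)) :=
    le_trans (mul_meas_ge_le_integral_of_nonneg
      (ae_of_all _ fun ω => (exp_pos _).le) hexpint _) hlap
  have hAsub : A ⊆ {ω | exp (-g) ≤ exp (-(M * Λ ω))} := by
    intro ω hω
    have hω' : Λ ω < g / M := hω
    show exp (-g) ≤ exp (-(M * Λ ω))
    apply exp_le_exp.mpr
    rw [lt_div_iff₀ hM] at hω'
    nlinarith
  have hAbound : (volume A).toReal ≤ exp (-(5 * g)) := by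
    have hmono : (volume A).toReal ≤
        (volume {ω | exp (-g) ≤ exp (-(M * Λ ω))}).toReal :=
      ENNReal.toReal_mono (measure_ne_top _ _) (measure_mono hAsub)
    have h6 : exp (-(6 * g)) = exp (-(5 * g)) * exp (-g) := by
      rw [← exp_add]; ring_nf
    nlinarith [exp_pos (-g), mul_le_mul_of_nonneg_left hmono (exp_pos (-g)).le]
  -- Markov for B
  have hmarkovB : hi * (volume {ω | hi ≤ Λ ω}).toReal ≤ 1 := by
    rw [← hmean]
    exact mul_meas_ge_le_integral_of_nonneg (ae_of_all _ hnonneg) hint _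
  have hBbound : (volume B).toReal ≤ (1 - exp (-(5 * g))) / 2 := by
    have hmono : (volume B).toReal ≤ (volume {ω | hi ≤ Λ ω}).toReal :=
      ENNReal.toReal_mono (measure_ne_top _ _)
        (measure_mono fun ω hω => show hi ≤ Λ ω from le_of_lt hω)
    have : hi * (volume B).toReal ≤ 1 := by
      nlinarith [mul_le_mul_of_nonneg_left hmono hi_pos.le]
    rw [hhi] at this
    rw [div_mul_eq_mul_div, div_le_one hden] at this
    linarith
  -- combine
  have hunion : ((volume (A ∪ B)).toReal) ≤ (volume A).toReal + (volume B).toReal := by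
    rw [← ENNReal.toReal_add (measure_ne_top _ _) (measure_ne_top _ _)]
    exact ENNReal.toReal_mono (by finiteness) (measure_union_le A B)
  have hcompl : (volume (A ∪ B)).toReal + (volume (A ∪ B)ᶜ).toReal = 1 := by
    rw [← ENNReal.toReal_add (measure_ne_top _ _) (measure_ne_top _ _),
      measure_add_measure_compl (hAmeas.union hBmeas), measure_univ, ENNReal.toReal_one]
  have hfinal : (1 - exp (-(5 * g))) / 2 ≤ (volume (A ∪ B)ᶜ).toReal := by
    linarith
  calc (1 - exp (-(5 * g))) / 2 ≤ (volume (A ∪ B)ᶜ).toReal := hfinal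
    _ ≤ _ := ENNReal.toReal_mono (measure_ne_top _ _)
        (measure_mono (hEeq ▸ hsub))
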